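/- Let k be a field, a a positive integer, and ζ ∈ k a primitive a-th root of unity. Let B = k[x,y]/(xy). Let i and j be integers coprime to a, and let σ be the unique k-algebra automorphism of B with σ(x) = ζ^i x and σ(y) = ζ^j y (it satisfies σ^a = id). Let A = B^{⟨σ⟩} = {b ∈ B : σ(b) = b} be the invariant subalgebra, and define E : B → A by E(b) = a⁻¹ ∑_{n=0}^{a−1} σ^n(b). Then the map Θ : B → Hom_A(B, A) defined by Θ(b)(c) = E(bc) is an isomorphism of B-modules (where Hom_A(B,A) is a B-module via (b·f)(c) = f(bc)), and Θ is σ-equivariant: Θ(σ(b))(c) = Θ(b)(σ⁻¹(c)) for all b, c ∈ B. -/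

import Mathlib

open MvPolynomial

/-- The affine node `B = k[x,y]/(xy)`. -/
abbrev NodeRing (k : Type) [Field k] : Type :=
  MvPolynomial (Fin 2) k ⧸ (Ideal.span {(X 0 * X 1 : MvPolynomial (Fin 2) k)})

/-- The class of `x` in `k[x,y]/(xy)`. -/
noncomputable def nodeX (k : Type) [Field k] : NodeRing k :=
  Ideal.Quotient.mk _ (X 0)

/-- The class of `y` in `k[x,y]/(xy)`. -/
noncomputable def nodeY (k : Type) [Field k] : NodeRing k :=
  Ideal.Quotient.mk _ (X 1)

section Aux
variable (k : Type) [Field k]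

lemma node_mul_XY : nodeX k * nodeY k = 0 := by
  rw [nodeX, nodeY, ← map_mul, Ideal.Quotient.eq_zero_iff_mem]
  exact Ideal.subset_span rfl

lemma node_pow_mul_pow {m n : ℕ} (hm : 1 ≤ m) (hn : 1 ≤ n) :
    nodeX k ^ m * nodeY k ^ n = 0 := by
  obtain ⟨m', rfl⟩ := Nat.exists_eq_add_of_le hm
  obtain ⟨n', rfl⟩ := Nat.exists_eq_add_of_le hn
  have : nodeX k ^ (1 + m') * nodeY k ^ (1 + n')
      = (nodeX k * nodeY k) * (nodeX k ^ m' * nodeY k ^ n') := by ring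
  rw [this, node_mul_XY, zero_mul]

lemma aeval_y_mul_x (Q : Polynomial k) (hQ : Q.coeff 0 = 0) :
    Polynomial.aeval (nodeY k) Q * nodeX k = 0 := by
  have h : Q = Polynomial.X * Q.divX := by
    conv_lhs => rw [← Polynomial.X_mul_divX_add Q, hQ, map_zero, add_zero]
  rw [h, map_mul, Polynomial.aeval_X]
  calc nodeY k * Polynomial.aeval (nodeY k) Q.divX * nodeX k
      = Polynomial.aeval (nodeY k) Q.divX * (nodeX k * nodeY k) := by ring
    _ = 0 := by rw [node_mul_XY, mul_zero]

lemma aeval_x_mul_y (P : Polynomial k) :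
    Polynomial.aeval (nodeX k) P * nodeY k = P.coeff 0 • nodeY k := by
  conv_lhs => rw [← Polynomial.X_mul_divX_add P]
  rw [map_add, map_mul, Polynomial.aeval_X, Polynomial.aeval_C, add_mul]
  have h1 : nodeX k * Polynomial.aeval (nodeX k) P.divX * nodeY k
      = Polynomial.aeval (nodeX k) P.divX * (nodeX k * nodeY k) := by ring
  rw [h1, node_mul_XY, mul_zero, zero_add, ← Algebra.smul_def]

lemma aeval_x_mul_y_pow (P : Polynomial k) {n : ℕ} (hn : 1 ≤ n) :
    Polynomial.aeval (nodeX k) P * nodeY k ^ n = P.coeff 0 • nodeY k ^ n := by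
  obtain ⟨n', rfl⟩ := Nat.exists_eq_add_of_le hn
  rw [pow_add, pow_one, ← mul_assoc, aeval_x_mul_y, smul_mul_assoc]

lemma aeval_y_mul_x_pow (Q : Polynomial k) (hQ : Q.coeff 0 = 0) {n : ℕ} (hn : 1 ≤ n) :
    Polynomial.aeval (nodeY k) Q * nodeX k ^ n = 0 := by
  obtain ⟨n', rfl⟩ := Nat.exists_eq_add_of_le hn
  rw [pow_add, pow_one, ← mul_assoc, aeval_y_mul_x k Q hQ, zero_mul]

/-- evaluation `x ↦ X, y ↦ 0`. -/
noncomputable def e1 : NodeRing k →ₐ[k] Polynomial k :=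
  Ideal.Quotient.liftₐ _ (MvPolynomial.aeval ![Polynomial.X, 0]) (by
    intro p hp
    obtain ⟨q, rfl⟩ := Ideal.mem_span_singleton.mp hp
    simp)

/-- evaluation `x ↦ 0, y ↦ X`. -/
noncomputable def e2 : NodeRing k →ₐ[k] Polynomial k :=
  Ideal.Quotient.liftₐ _ (MvPolynomial.aeval ![0, Polynomial.X]) (by
    intro p hp
    obtain ⟨q, rfl⟩ := Ideal.mem_span_singleton.mp hp
    simp)

@[simp] lemma e1_x : e1 k (nodeX k) = Polynomial.X := by
  simp [e1, nodeX, Ideal.Quotient.liftₐ_apply]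
  exact MvPolynomial.aeval_X _ _

@[simp] lemma e1_y : e1 k (nodeY k) = 0 := by
  simp [e1, nodeY, Ideal.Quotient.liftₐ_apply]
  exact MvPolynomial.aeval_X _ _

@[simp] lemma e2_x : e2 k (nodeX k) = 0 := by
  simp [e2, nodeX, Ideal.Quotient.liftₐ_apply]
  exact MvPolynomial.aeval_X _ _

@[simp] lemma e2_y : e2 k (nodeY k) = Polynomial.X := by
  simp [e2, nodeY, Ideal.Quotient.liftₐ_apply]
  exact MvPolynomial.aeval_X _ _

@[simp] lemma e1_aeval_x (P : Polynomial k) :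
    e1 k (Polynomial.aeval (nodeX k) P) = P := by
  rw [← Polynomial.aeval_algHom_apply, e1_x, Polynomial.aeval_X_left_apply]

@[simp] lemma e2_aeval_y (Q : Polynomial k) :
    e2 k (Polynomial.aeval (nodeY k) Q) = Q := by
  rw [← Polynomial.aeval_algHom_apply, e2_y, Polynomial.aeval_X_left_apply]

@[simp] lemma e1_aeval_y (Q : Polynomial k) :
    e1 k (Polynomial.aeval (nodeY k) Q) = Polynomial.C (Q.coeff 0) := by
  rw [← Polynomial.aeval_algHom_apply, e1_y]
  simp [Polynomial.aeval_def, Polynomial.eval₂_at_zero]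

@[simp] lemma e2_aeval_x (P : Polynomial k) :
    e2 k (Polynomial.aeval (nodeX k) P) = Polynomial.C (P.coeff 0) := by
  rw [← Polynomial.aeval_algHom_apply, e2_x]
  simp [Polynomial.aeval_def, Polynomial.eval₂_at_zero]

lemma node_rep (b : NodeRing k) :
    ∃ P Q : Polynomial k, Q.coeff 0 = 0 ∧
      b = Polynomial.aeval (nodeX k) P + Polynomial.aeval (nodeY k) Q := by
  obtain ⟨p, rfl⟩ := Ideal.Quotient.mk_surjective b
  induction p using MvPolynomial.induction_on with
  | C c =>
      refine ⟨Polynomial.C c, 0, by simp, ?_⟩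
      rw [map_zero, add_zero, Polynomial.aeval_C]
      rfl
  | add p q hp hq =>
      obtain ⟨P₁, Q₁, h₁, e₁⟩ := hp
      obtain ⟨P₂, Q₂, h₂, e₂⟩ := hq
      refine ⟨P₁ + P₂, Q₁ + Q₂, by simp [h₁, h₂], ?_⟩
      rw [RingHom.map_add, e₁, e₂, map_add, map_add]
      ring
  | mul_X p n hp =>
      obtain ⟨P, Q, hQ, e⟩ := hp
      have hmk : ∀ m : Fin 2, (Ideal.Quotient.mk (Ideal.span {(X 0 * X 1 : MvPolynomial (Fin 2) k)}) (p * X m) : NodeRing k)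
          = Ideal.Quotient.mk _ p * Ideal.Quotient.mk _ (X m) := fun m => map_mul _ _ _
      fin_cases n
      · refine ⟨P * Polynomial.X, 0, by simp, ?_⟩
        have hx : (Ideal.Quotient.mk (Ideal.span {(X 0 * X 1 : MvPolynomial (Fin 2) k)}) (X ⟨0, by norm_num⟩) : NodeRing k) = nodeX k := rfl
        rw [hmk, hx, e, add_mul, aeval_y_mul_x k Q hQ, add_zero, map_mul, Polynomial.aeval_X, map_zero, add_zero]
      · refine ⟨0, Polynomial.C (P.coeff 0) * Polynomial.X + Q * Polynomial.X, by simp, ?_⟩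
        have hy : (Ideal.Quotient.mk (Ideal.span {(X 0 * X 1 : MvPolynomial (Fin 2) k)}) (X ⟨1, by norm_num⟩) : NodeRing k) = nodeY k := rfl
        rw [hmk, hy, e, add_mul, aeval_x_mul_y, map_zero, zero_add, map_add, map_mul, map_mul,
          Polynomial.aeval_X, Polynomial.aeval_C, ← Algebra.smul_def]

lemma coeff_sum_smul_X_pow (g : ℕ → k) (N t : ℕ) :
    (∑ m ∈ Finset.range N, g m • (Polynomial.X : Polynomial k) ^ m).coeff t
      = if t < N then g t else 0 := by
  rw [Polynomial.finset_sum_coeff]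
  have h : ∀ m ∈ Finset.range N,
      (g m • (Polynomial.X : Polynomial k) ^ m).coeff t = if m = t then g m else 0 := by
    intro m _
    rw [Polynomial.coeff_smul, Polynomial.coeff_X_pow]
    by_cases h : t = m
    · simp [h]
    · simp [h, Ne.symm h]
  rw [Finset.sum_congr rfl h, Finset.sum_ite_eq' (Finset.range N) t g]
  simp [Finset.mem_range]

end Aux


set_option maxHeartbeats 16000000 in
set_option synthInstance.maxHeartbeats 100000 in
/-- Let `k` be a field, `a` a positive integer, `ζ ∈ k` a primitive `a`-th root
of unity, `B = k[x,y]/(xy)`, `i, j` coprime to `a`, and `σ` the (unique) `k`-algebra automorphism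
of `B` with `σ x = ζ^i • x`, `σ y = ζ^j • y`.  Let `A = B^⟨σ⟩` be the invariant subalgebra and
`E b = a⁻¹ ∑_{n<a} σⁿ b` the averaging projection onto `A`.  Then `Θ : B → Hom_A(B, A)`,
`Θ b c = E (b * c)`, is an isomorphism of `B`-modules (where `Hom_A(B,A)` has the `B`-module
structure `(b • f) c = f (b * c)`), and `Θ` is `σ`-equivariant: `Θ (σ b) c = Θ b (σ⁻¹ c)`.
`A`-linear maps `B → A` are encoded as additive maps `f : B → B` with `σ`-invariant values
satisfying `f (s * c) = s * f c` for all `σ`-invariant `s`. -/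
theorem stmt4 (k : Type) [Field k] (a : ℕ) (ha : 0 < a) (ζ : k) (hζ : IsPrimitiveRoot ζ a)
    (i j : ℕ) (hi : Nat.Coprime i a) (hj : Nat.Coprime j a)
    (σ : NodeRing k ≃ₐ[k] NodeRing k)
    (hσx : σ (nodeX k) = ζ ^ i • nodeX k) (hσy : σ (nodeY k) = ζ ^ j • nodeY k)
    (E : NodeRing k → NodeRing k)
    (hE : ∀ b, E b = (a : k)⁻¹ • ∑ n ∈ Finset.range a, (σ ^ n) b)
    (Θ : NodeRing k → NodeRing k → NodeRing k)
    (hΘ : ∀ b c, Θ b c = E (b * c)) :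
    -- `E` takes values in the invariant subalgebra `A`
    (∀ b, σ (E b) = E b) ∧
    -- each `Θ b` is an `A`-linear map `B → A`
    (∀ b c₁ c₂, Θ b (c₁ + c₂) = Θ b c₁ + Θ b c₂) ∧
    (∀ b s c, σ s = s → Θ b (s * c) = s * Θ b c) ∧
    -- `Θ` is a morphism for the `B`-module structure `(b • f) c = f (b * c)` on `Hom_A(B, A)`
    (∀ b b' c, Θ (b' * b) c = Θ b (b' * c)) ∧
    -- `Θ` is bijective onto `Hom_A(B, A)`
    (∀ f : NodeRing k → NodeRing k,
        (∀ c₁ c₂, f (c₁ + c₂) = f c₁ + f c₂) →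
        (∀ s c, σ s = s → f (s * c) = s * f c) →
        (∀ c, σ (f c) = f c) →
        ∃! b : NodeRing k, ∀ c, f c = Θ b c) ∧
    -- `σ`-equivariance
    (∀ b c, Θ (σ b) c = Θ b (σ.symm c)) := by
  classical
  have hka : ((a : ℕ) : k) ≠ 0 := by
    haveI : NeZero a := ⟨ha.ne'⟩
    exact (hζ.neZero').out
  have hζa : ζ ^ a = 1 := hζ.pow_eq_one
  -- powers of σ on scaled elements
  have hσpow : ∀ (z : NodeRing k) (w : k), σ z = w • z → ∀ n, (σ ^ n) z = w ^ n • z := by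
    intro z w hz n
    induction n with
    | zero => simp
    | succ n ih =>
        rw [pow_succ', AlgEquiv.mul_apply, ih, map_smul, hz, smul_smul, ← pow_succ]
  have hσzpow : ∀ (z : NodeRing k) (w : k), σ z = w • z →
      ∀ m, σ (z ^ m) = w ^ m • z ^ m := by
    intro z w hz m
    rw [map_pow, hz, smul_pow]
  have hσnzpow : ∀ (z : NodeRing k) (w : k), σ z = w • z →
      ∀ n m, (σ ^ n) (z ^ m) = (w ^ m) ^ n • z ^ m :=
    fun z w hz n m => hσpow (z ^ m) (w ^ m) (hσzpow z w hz m) n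
  -- additivity etc. of E
  have hEadd : ∀ b c, E (b + c) = E b + E c := by
    intro b c
    simp only [hE, map_add]
    rw [Finset.sum_add_distrib, smul_add]
  have hE0 : E 0 = 0 := by simp [hE]
  have hEsmul : ∀ (α : k) b, E (α • b) = α • E b := by
    intro α b
    simp only [hE, map_smul]
    rw [← Finset.smul_sum, smul_comm]
  have hEsub : ∀ b c, E (b - c) = E b - E c := by
    intro b c
    simp only [hE, map_sub]
    rw [Finset.sum_sub_distrib, smul_sub]
  have hEsum : ∀ {ι : Type} (s : Finset ι) (g : ι → NodeRing k),
      E (∑ t ∈ s, g t) = ∑ t ∈ s, E (g t) := by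
    intro ι s g
    induction s using Finset.cons_induction with
    | empty => simpa using hE0
    | cons t s hts ih => rw [Finset.sum_cons, Finset.sum_cons, hEadd, ih]
  -- E on powers of scaled elements
  have hEzpow : ∀ (z : NodeRing k) (w : k), σ z = w • z → (∀ m, w ^ m = 1 ↔ a ∣ m) →
      ∀ m, E (z ^ m) = if a ∣ m then z ^ m else 0 := by
    intro z w hz hw m
    rw [hE]
    rw [Finset.sum_congr rfl (fun n _ => hσnzpow z w hz n m), ← Finset.sum_smul, smul_smul]
    by_cases hd : a ∣ m
    · rw [(hw m).2 hd]
      simp only [one_pow, Finset.sum_const, Finset.card_range, nsmul_eq_mul, mul_one]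
      rw [inv_mul_cancel₀ hka, one_smul, if_pos hd]
    · have h1 : w ^ m ≠ 1 := fun h => hd ((hw m).1 h)
      have h2 : (w ^ m) ^ a = 1 := by
        rw [← pow_mul, mul_comm, pow_mul, (hw a).2 dvd_rfl, one_pow]
      rw [geom_sum_eq h1, h2, sub_self, zero_div, mul_zero, zero_smul, if_neg hd]
  -- E of invariant multiples
  have hσninv : ∀ s, σ s = s → ∀ n, (σ ^ n) s = s := by
    intro s hs n
    induction n with
    | zero => simp
    | succ n ih => rw [pow_succ', AlgEquiv.mul_apply, ih, hs]
  have hEmul_inv : ∀ s d, σ s = s → E (s * d) = s * E d := by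
    intro s d hs
    simp only [hE, map_mul]
    rw [Finset.sum_congr rfl (fun n _ => by rw [hσninv s hs n]), ← Finset.mul_sum,
      mul_smul_comm]
  -- σ^a = 1
  have happly : ∀ (F : NodeRing k ≃ₐ[k] NodeRing k) (z : NodeRing k) (R : Polynomial k),
      F (Polynomial.aeval z R) = Polynomial.aeval (F z) R := by
    intro F z R
    exact (Polynomial.aeval_algHom_apply (F : NodeRing k →ₐ[k] NodeRing k) z R).symm
  have hσa : ∀ b, (σ ^ a) b = b := by
    have hone : ∀ t : ℕ, ζ ^ (t * a) = 1 := by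
      intro t
      rw [mul_comm, pow_mul, hζa, one_pow]
    have hx : (σ ^ a) (nodeX k) = nodeX k := by
      rw [hσpow _ _ hσx a, ← pow_mul, hone, one_smul]
    have hy : (σ ^ a) (nodeY k) = nodeY k := by
      rw [hσpow _ _ hσy a, ← pow_mul, hone, one_smul]
    intro b
    obtain ⟨P, Q, hQ0, rfl⟩ := node_rep k b
    rw [map_add, happly, happly, hx, hy]
  -- E ∘ σ = E
  have hEσ : ∀ b, E (σ b) = E b := by
    intro b
    rw [hE, hE]
    congr 1
    have h1 : ∀ n, (σ ^ n) (σ b) = (σ ^ (n + 1)) b := by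
      intro n
      rw [pow_succ, AlgEquiv.mul_apply]
    rw [Finset.sum_congr rfl (fun n _ => h1 n)]
    have h2 : (∑ n ∈ Finset.range a, (σ ^ (n + 1)) b) + (σ ^ 0) b
        = ∑ n ∈ Finset.range (a + 1), (σ ^ n) b := (Finset.sum_range_succ' (fun n => (σ ^ n) b) a).symm
    have h3 : ∑ n ∈ Finset.range (a + 1), (σ ^ n) b
        = (∑ n ∈ Finset.range a, (σ ^ n) b) + (σ ^ a) b := Finset.sum_range_succ _ a
    have h4 : (σ ^ 0) b = b := by simp
    have h5 := h2.trans h3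
    rw [h4, hσa b] at h5
    exact add_right_cancel h5
  have hσE : ∀ b, σ (E b) = E b := by
    intro b
    have h1 : σ (E b) = E (σ b) := by
      rw [hE, hE, map_smul, map_sum]
      congr 1
      refine Finset.sum_congr rfl fun n _ => ?_
      rw [← AlgEquiv.mul_apply, ← AlgEquiv.mul_apply, ← pow_succ', ← pow_succ]
    rw [h1, hEσ]
  refine ⟨hσE, ?_, ?_, ?_, ?_, ?_⟩
  · intro b c₁ c₂
    rw [hΘ, hΘ, hΘ, mul_add, hEadd]
  · intro b s c hs
    rw [hΘ, hΘ, show b * (s * c) = s * (b * c) by ring, hEmul_inv s _ hs]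
  · intro b b' c
    rw [hΘ, hΘ, show b' * b * c = b * (b' * c) by ring]
  · -- bijectivity
    intro f hfadd hfA hfinv
    -- roots-of-unity arithmetic
    have hwx : ∀ m, (ζ ^ i) ^ m = 1 ↔ a ∣ m := by
      intro m
      rw [← pow_mul, hζ.pow_eq_one_iff_dvd]
      exact (Nat.Coprime.dvd_mul_left hi.symm)
    have hwy : ∀ m, (ζ ^ j) ^ m = 1 ↔ a ∣ m := by
      intro m
      rw [← pow_mul, hζ.pow_eq_one_iff_dvd]
      exact (Nat.Coprime.dvd_mul_left hj.symm)
    -- E on polynomial expressions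
    have hEaeval : ∀ (z : NodeRing k) (w : k), σ z = w • z → (∀ m, w ^ m = 1 ↔ a ∣ m) →
        ∀ R : Polynomial k, E (Polynomial.aeval z R)
          = ∑ m ∈ Finset.range (R.natDegree + 1),
              (if a ∣ m then R.coeff m • z ^ m else 0) := by
      intro z w hz hw R
      rw [Polynomial.aeval_eq_sum_range, hEsum]
      refine Finset.sum_congr rfl fun m _ => ?_
      rw [hEsmul, hEzpow z w hz hw m]
      by_cases hd : a ∣ m <;> simp [hd]
    have hEfix : ∀ (z : NodeRing k) (w : k), σ z = w • z → (∀ m, w ^ m = 1 ↔ a ∣ m) →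
        ∀ R : Polynomial k, (∀ t, ¬ a ∣ t → R.coeff t = 0) →
          E (Polynomial.aeval z R) = Polynomial.aeval z R := by
      intro z w hz hw R hsupp
      rw [hEaeval z w hz hw R, Polynomial.aeval_eq_sum_range]
      refine Finset.sum_congr rfl fun m _ => ?_
      by_cases hd : a ∣ m
      · rw [if_pos hd]
      · rw [if_neg hd, hsupp m hd, zero_smul]
    have hEkill : ∀ (z : NodeRing k) (w : k), σ z = w • z → (∀ m, w ^ m = 1 ↔ a ∣ m) →
        ∀ R : Polynomial k, (∀ t, a ∣ t → R.coeff t = 0) →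
          E (Polynomial.aeval z R) = 0 := by
      intro z w hz hw R hsupp
      rw [hEaeval z w hz hw R]
      refine Finset.sum_eq_zero fun m _ => ?_
      by_cases hd : a ∣ m
      · rw [if_pos hd, hsupp m hd, zero_smul]
      · rw [if_neg hd]
    -- coefficients at multiples of a vanish when E kills
    have hvanish : ∀ (z : NodeRing k) (w : k), σ z = w • z → (∀ m, w ^ m = 1 ↔ a ∣ m) →
        ∀ (e : NodeRing k →ₐ[k] Polynomial k), e z = Polynomial.X →
        ∀ R : Polynomial k, E (Polynomial.aeval z R) = 0 → ∀ t, a ∣ t → R.coeff t = 0 := by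
      intro z w hz hw e he R hER t hta
      by_cases hN : t < R.natDegree + 1
      · rw [hEaeval z w hz hw R] at hER
        have h1 := congrArg e hER
        rw [map_sum, map_zero] at h1
        have h2 : ∀ m ∈ Finset.range (R.natDegree + 1),
            e (if a ∣ m then R.coeff m • z ^ m else 0)
              = (if a ∣ m then R.coeff m else 0) • Polynomial.X ^ m := by
          intro m _
          by_cases hd : a ∣ m
          · rw [if_pos hd, if_pos hd, map_smul, map_pow, he]
          · rw [if_neg hd, if_neg hd, map_zero, zero_smul]
        rw [Finset.sum_congr rfl h2] at h1
        have h3 := congrArg (fun p => Polynomial.coeff p t) h1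
        simp only [coeff_sum_smul_X_pow, Polynomial.coeff_zero] at h3
        rw [if_pos hN, if_pos hta] at h3
        exact h3
      · exact Polynomial.coeff_eq_zero_of_natDegree_lt (by omega)
    have hvanish2 : ∀ (z : NodeRing k) (w : k), σ z = w • z → (∀ m, w ^ m = 1 ↔ a ∣ m) →
        ∀ (e : NodeRing k →ₐ[k] Polynomial k), e z = Polynomial.X →
        ∀ R : Polynomial k, (∀ r : ℕ, 1 ≤ r → E (Polynomial.aeval z R * z ^ r) = 0) →
          R = 0 := by
      intro z w hz hw e he R hR
      ext s
      rw [Polynomial.coeff_zero]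
      have h0 : s % a < a := Nat.mod_lt s ha
      have hdm := Nat.div_add_mod s a
      set r := a - s % a with hrdef
      have hr1 : 1 ≤ r := by omega
      have hdvd : a ∣ s + r := by
        refine ⟨s / a + 1, ?_⟩
        have hmul : a * (s / a + 1) = a * (s / a) + a := Nat.mul_succ a (s / a)
        omega
      have h1 : Polynomial.aeval z R * z ^ r = Polynomial.aeval z (R * Polynomial.X ^ r) := by
        rw [map_mul, map_pow, Polynomial.aeval_X]
      have h2 := hvanish z w hz hw e he (R * Polynomial.X ^ r)
        (by rw [← h1]; exact hR r hr1) (s + r) hdvd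
      rwa [Polynomial.coeff_mul_X_pow] at h2
    -- injectivity core
    have hinj : ∀ d : NodeRing k, (∀ c, E (d * c) = 0) → d = 0 := by
      intro d hd
      obtain ⟨P, Q, hQ0, rfl⟩ := node_rep k d
      have hP : P = 0 := by
        refine hvanish2 (nodeX k) (ζ ^ i) hσx hwx (e1 k) (e1_x k) P (fun r hr => ?_)
        have h1 := hd (nodeX k ^ r)
        rwa [add_mul, aeval_y_mul_x_pow k Q hQ0 hr, add_zero] at h1
      have hQ : Q = 0 := by
        refine hvanish2 (nodeY k) (ζ ^ j) hσy hwy (e2 k) (e2_y k) Q (fun r hr => ?_)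
        have h1 := hd (nodeY k ^ r)
        rwa [add_mul, hP, map_zero, zero_mul, zero_add] at h1
      rw [hP, hQ, map_zero, map_zero, add_zero]
    -- linearity of f
    have hf0 : f 0 = 0 := by
      have h := hfadd 0 0
      rw [add_zero] at h
      exact (left_eq_add.mp h)
    have hfsmul : ∀ (α : k) (c : NodeRing k), f (α • c) = α • f c := by
      intro α c
      have hinvα : σ (algebraMap k (NodeRing k) α) = algebraMap k (NodeRing k) α :=
        σ.commutes α
      have h := hfA (algebraMap k (NodeRing k) α) c hinvα
      rwa [← Algebra.smul_def, ← Algebra.smul_def] at h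
    have hfsum : ∀ {ι : Type} (s : Finset ι) (g : ι → NodeRing k),
        f (∑ t ∈ s, g t) = ∑ t ∈ s, f (g t) := by
      intro ι s g
      induction s using Finset.cons_induction with
      | empty => simpa using hf0
      | cons t s hts ih => rw [Finset.sum_cons, Finset.sum_cons, hfadd, ih]
    -- invariant powers
    have hinvx : ∀ q : ℕ, σ (nodeX k ^ (a * q)) = nodeX k ^ (a * q) := by
      intro q
      rw [hσzpow _ _ hσx, (hwx (a * q)).2 ⟨q, rfl⟩, one_smul]
    have hinvy : ∀ q : ℕ, σ (nodeY k ^ (a * q)) = nodeY k ^ (a * q) := by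
      intro q
      rw [hσzpow _ _ hσy, (hwy (a * q)).2 ⟨q, rfl⟩, one_smul]
    -- invariant elements have coefficients supported on multiples of a
    have hsuppinv : ∀ (z : NodeRing k) (w : k), σ z = w • z → (∀ m, w ^ m = 1 ↔ a ∣ m) →
        ∀ (e : NodeRing k →ₐ[k] Polynomial k), e z = Polynomial.X →
        ∀ R : Polynomial k, σ (Polynomial.aeval z R) = Polynomial.aeval z R →
        ∀ t, ¬ a ∣ t → R.coeff t = 0 := by
      intro z w hz hw e he R hinvR t hta
      by_cases hN : t < R.natDegree + 1
      · have h2 : σ (Polynomial.aeval z R)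
            = ∑ m ∈ Finset.range (R.natDegree + 1), (R.coeff m * w ^ m) • z ^ m := by
          rw [Polynomial.aeval_eq_sum_range, map_sum]
          refine Finset.sum_congr rfl fun m _ => ?_
          rw [map_smul, hσzpow z w hz m, smul_smul]
        have h3 := congrArg e hinvR
        rw [h2] at h3
        rw [Polynomial.aeval_eq_sum_range, map_sum, map_sum] at h3
        simp only [map_smul, map_pow, he] at h3
        have h4 := congrArg (fun p => Polynomial.coeff p t) h3
        simp only [coeff_sum_smul_X_pow] at h4
        rw [if_pos hN, if_pos hN] at h4
        have hw1 : w ^ t ≠ 1 := fun h => hta ((hw t).1 h)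
        have h5 : R.coeff t * (w ^ t - 1) = 0 := by
          rw [mul_sub, h4, mul_one, sub_self]
        rcases mul_eq_zero.mp h5 with h | h
        · exact h
        · exact absurd (by rwa [sub_eq_zero] at h) hw1
      · exact Polynomial.coeff_eq_zero_of_natDegree_lt (by omega)
    -- structure of invariant elements killed by y^a  (x-side)
    have hsx : ∀ s : NodeRing k, σ s = s → s * nodeY k ^ a = 0 →
        ∃ S : Polynomial k, (∀ t, ¬ a ∣ t → S.coeff t = 0) ∧
          s = Polynomial.aeval (nodeX k) (Polynomial.X ^ a * S) := by
      intro s hsinv hsy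
      obtain ⟨P, Q, hQ0, rfl⟩ := node_rep k s
      have h1 : (Polynomial.aeval (nodeX k) P + Polynomial.aeval (nodeY k) Q) * nodeY k ^ a
          = Polynomial.aeval (nodeY k) ((Polynomial.C (P.coeff 0) + Q) * Polynomial.X ^ a) := by
        rw [add_mul, aeval_x_mul_y_pow k P ha, map_mul, map_add, Polynomial.aeval_C,
          map_pow, Polynomial.aeval_X, add_mul, ← Algebra.smul_def]
      rw [h1] at hsy
      have h2 := congrArg (e2 k) hsy
      rw [e2_aeval_y, map_zero] at h2
      have h3 : Polynomial.C (P.coeff 0) + Q = 0 := by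
        rcases mul_eq_zero.mp h2 with h | h
        · exact h
        · exact absurd h (pow_ne_zero a Polynomial.X_ne_zero)
      have hP0 : P.coeff 0 = 0 := by
        have h4 := congrArg (fun p => Polynomial.coeff p 0) h3
        simpa [hQ0] using h4
      have hQz : Q = 0 := by
        rw [hP0, map_zero, zero_add] at h3
        exact h3
      rw [hQz, map_zero, add_zero] at hsinv ⊢
      have hPsupp := hsuppinv (nodeX k) (ζ ^ i) hσx hwx (e1 k) (e1_x k) P hsinv
      have hdvd : Polynomial.X ^ a ∣ P := by
        rw [Polynomial.X_pow_dvd_iff]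
        intro d hd
        by_cases hda : a ∣ d
        · have hd0 : d = 0 := Nat.eq_zero_of_dvd_of_lt hda hd
          rw [hd0]
          exact hP0
        · exact hPsupp d hda
      obtain ⟨S, hS⟩ := hdvd
      refine ⟨S, fun t hta => ?_, by rw [← hS]⟩
      have h5 : P.coeff (t + a) = S.coeff t := by rw [hS, Polynomial.coeff_X_pow_mul]
      rw [← h5]
      refine hPsupp (t + a) (fun hdd => hta ?_)
      have h6 : t + a - a = t := by omega
      have h7 : a ∣ t + a - a := Nat.dvd_sub hdd dvd_rfl
      rwa [h6] at h7
    -- structure of invariant elements killed by x^a  (y-side)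
    have hsy' : ∀ s : NodeRing k, σ s = s → s * nodeX k ^ a = 0 →
        ∃ S : Polynomial k, (∀ t, ¬ a ∣ t → S.coeff t = 0) ∧
          s = Polynomial.aeval (nodeY k) (Polynomial.X ^ a * S) := by
      intro s hsinv hsxa
      obtain ⟨P, Q, hQ0, rfl⟩ := node_rep k s
      have h1 : Polynomial.aeval (nodeX k) (P * Polynomial.X ^ a) = 0 := by
        rw [map_mul, map_pow, Polynomial.aeval_X]
        rw [add_mul, aeval_y_mul_x_pow k Q hQ0 ha, add_zero] at hsxa
        exact hsxa
      have h3 := congrArg (e1 k) h1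
      rw [e1_aeval_x, map_zero] at h3
      have hP : P = 0 := by
        rcases mul_eq_zero.mp h3 with h | h
        · exact h
        · exact absurd h (pow_ne_zero a Polynomial.X_ne_zero)
      rw [hP, map_zero, zero_add] at hsinv ⊢
      have hQsupp := hsuppinv (nodeY k) (ζ ^ j) hσy hwy (e2 k) (e2_y k) Q hsinv
      have hdvd : Polynomial.X ^ a ∣ Q := by
        rw [Polynomial.X_pow_dvd_iff]
        intro d hd
        by_cases hda : a ∣ d
        · have hd0 : d = 0 := Nat.eq_zero_of_dvd_of_lt hda hd
          rw [hd0]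
          exact hQ0
        · exact hQsupp d hda
      obtain ⟨S, hS⟩ := hdvd
      refine ⟨S, fun t hta => ?_, by rw [← hS]⟩
      have h5 : Q.coeff (t + a) = S.coeff t := by rw [hS, Polynomial.coeff_X_pow_mul]
      rw [← h5]
      refine hQsupp (t + a) (fun hdd => hta ?_)
      have h6 : t + a - a = t := by omega
      have h7 : a ∣ t + a - a := Nat.dvd_sub hdd dvd_rfl
      rwa [h6] at h7
    -- the values f(x^r), f(y^r) are annihilated appropriately
    have hfx_ann : ∀ r : ℕ, 1 ≤ r → f (nodeX k ^ r) * nodeY k ^ a = 0 := by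
      intro r hr
      have hya_inv : σ (nodeY k ^ a) = nodeY k ^ a := by
        have h := hinvy 1
        rwa [mul_one] at h
      have h := hfA (nodeY k ^ a) (nodeX k ^ r) hya_inv
      have h0 : nodeY k ^ a * nodeX k ^ r = 0 := by
        rw [mul_comm]
        exact node_pow_mul_pow k hr ha
      rw [h0, hf0] at h
      rw [mul_comm, ← h]
    have hfy_ann : ∀ r : ℕ, 1 ≤ r → f (nodeY k ^ r) * nodeX k ^ a = 0 := by
      intro r hr
      have hxa_inv : σ (nodeX k ^ a) = nodeX k ^ a := by
        have h := hinvx 1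
        rwa [mul_one] at h
      have h := hfA (nodeX k ^ a) (nodeY k ^ r) hxa_inv
      have h0 : nodeX k ^ a * nodeY k ^ r = 0 := node_pow_mul_pow k ha hr
      rw [h0, hf0] at h
      rw [mul_comm, ← h]
    -- choose structured representatives
    have hexx : ∀ r : {r // r ∈ Finset.Ico 1 a}, ∃ S : Polynomial k,
        (∀ t, ¬ a ∣ t → S.coeff t = 0) ∧
        f (nodeX k ^ (r : ℕ)) = Polynomial.aeval (nodeX k) (Polynomial.X ^ a * S) := by
      intro r
      obtain ⟨hr1, hr2⟩ := Finset.mem_Ico.mp r.2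
      exact hsx (f (nodeX k ^ (r : ℕ))) (hfinv _) (hfx_ann _ hr1)
    have hexy : ∀ r : {r // r ∈ Finset.Ico 1 a}, ∃ S : Polynomial k,
        (∀ t, ¬ a ∣ t → S.coeff t = 0) ∧
        f (nodeY k ^ (r : ℕ)) = Polynomial.aeval (nodeY k) (Polynomial.X ^ a * S) := by
      intro r
      obtain ⟨hr1, hr2⟩ := Finset.mem_Ico.mp r.2
      exact hsy' (f (nodeY k ^ (r : ℕ))) (hfinv _) (hfy_ann _ hr1)
    choose SX hSX1 hSX2 using hexx
    choose SY hSY1 hSY2 using hexy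
    obtain ⟨b, hbdef⟩ : ∃ b : NodeRing k, b = f 1
      + (∑ r ∈ (Finset.Ico 1 a).attach,
          nodeX k ^ (a - (r : ℕ)) * Polynomial.aeval (nodeX k) (SX r))
      + (∑ r ∈ (Finset.Ico 1 a).attach,
          nodeY k ^ (a - (r : ℕ)) * Polynomial.aeval (nodeY k) (SY r)) := ⟨_, rfl⟩
    -- arithmetic helper
    have harith : ∀ r m : ℕ, 1 ≤ r → r < a → m < a → ¬ r = m →
        ¬ a ∣ (a - r + m) := by
      intro r m hr1 hr2 hm hrm hdd
      obtain ⟨u, hu⟩ := hdd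
      rcases u with _ | _ | n
      · simp at hu
        omega
      · simp at hu
        omega
      · have h8 : a * (n + 1 + 1) = a * n + a + a := by ring
        omega
    -- evaluation of Θ b on small powers of x
    have hbx : ∀ m : ℕ, m < a → E (b * nodeX k ^ m) = f (nodeX k ^ m) := by
      intro m hm
      rw [hbdef, add_mul, add_mul, Finset.sum_mul, Finset.sum_mul, hEadd, hEadd, hEsum, hEsum]
      have ht1 : E (f 1 * nodeX k ^ m) = if m = 0 then f 1 else 0 := by
        rw [hEmul_inv _ _ (hfinv 1), hEzpow _ _ hσx hwx m]
        by_cases hm0 : m = 0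
        · subst hm0
          simp
        · rw [if_neg (fun hd : a ∣ m => hm0 (Nat.eq_zero_of_dvd_of_lt hd hm)), mul_zero,
            if_neg hm0]
      have ht2 : ∀ r ∈ (Finset.Ico 1 a).attach,
          E (nodeX k ^ (a - (r : ℕ)) * Polynomial.aeval (nodeX k) (SX r) * nodeX k ^ m)
            = if (r : ℕ) = m then f (nodeX k ^ (r : ℕ)) else 0 := by
        intro r _
        obtain ⟨hr1, hr2⟩ := Finset.mem_Ico.mp r.2
        have heq : nodeX k ^ (a - (r : ℕ)) * Polynomial.aeval (nodeX k) (SX r) * nodeX k ^ m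
            = Polynomial.aeval (nodeX k) (Polynomial.X ^ (a - (r : ℕ) + m) * SX r) := by
          rw [map_mul, map_pow, Polynomial.aeval_X, pow_add]
          ring
        rw [heq]
        by_cases hrm : (r : ℕ) = m
        · rw [if_pos hrm]
          have hc : a - (r : ℕ) + m = a := by omega
          rw [hc, hEfix _ _ hσx hwx _ ?_, ← hSX2 r]
          intro t hta
          rw [Polynomial.coeff_X_pow_mul']
          by_cases hle : a ≤ t
          · rw [if_pos hle]
            refine hSX1 r _ (fun hdd => hta ?_)
            have h6 : t - a + a = t := by omega
            have h7 := Nat.dvd_add hdd (dvd_refl a)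
            rwa [h6] at h7
          · rw [if_neg hle]
        · rw [if_neg hrm]
          refine hEkill _ _ hσx hwx _ ?_
          intro t hta
          rw [Polynomial.coeff_X_pow_mul']
          by_cases hle : a - (r : ℕ) + m ≤ t
          · rw [if_pos hle]
            refine hSX1 r _ (fun hdd => ?_)
            have h6 : a ∣ t - (t - (a - (r : ℕ) + m)) := Nat.dvd_sub hta hdd
            have h7 : t - (t - (a - (r : ℕ) + m)) = a - (r : ℕ) + m := by omega
            rw [h7] at h6
            exact harith (r : ℕ) m hr1 hr2 hm hrm h6
          · rw [if_neg hle]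
      have ht3 : ∀ r ∈ (Finset.Ico 1 a).attach,
          E (nodeY k ^ (a - (r : ℕ)) * Polynomial.aeval (nodeY k) (SY r) * nodeX k ^ m)
            = 0 := by
        intro r _
        obtain ⟨hr1, hr2⟩ := Finset.mem_Ico.mp r.2
        by_cases hm0 : m = 0
        · subst hm0
          rw [pow_zero, mul_one]
          have heq : nodeY k ^ (a - (r : ℕ)) * Polynomial.aeval (nodeY k) (SY r)
              = Polynomial.aeval (nodeY k) (Polynomial.X ^ (a - (r : ℕ)) * SY r) := by
            rw [map_mul, map_pow, Polynomial.aeval_X]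
          rw [heq]
          refine hEkill _ _ hσy hwy _ ?_
          intro t hta
          rw [Polynomial.coeff_X_pow_mul']
          by_cases hle : a - (r : ℕ) ≤ t
          · rw [if_pos hle]
            refine hSY1 r _ (fun hdd => ?_)
            have h6 : a ∣ t - (t - (a - (r : ℕ))) := Nat.dvd_sub hta hdd
            have h7 : t - (t - (a - (r : ℕ))) = a - (r : ℕ) := by omega
            rw [h7] at h6
            have h8 := Nat.le_of_dvd (by omega) h6
            omega
          · rw [if_neg hle]
        · have h0 : nodeY k ^ (a - (r : ℕ)) * Polynomial.aeval (nodeY k) (SY r) * nodeX k ^ m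
              = Polynomial.aeval (nodeY k) (SY r)
                * (nodeX k ^ m * nodeY k ^ (a - (r : ℕ))) := by ring
          rw [h0, node_pow_mul_pow k (by omega) (by omega), mul_zero, hE0]
      rw [Finset.sum_congr rfl ht2, Finset.sum_congr rfl ht3, ht1, Finset.sum_const_zero,
        add_zero,
        Finset.sum_attach (Finset.Ico 1 a) (fun r => if r = m then f (nodeX k ^ r) else 0),
        Finset.sum_ite_eq' (Finset.Ico 1 a) m (fun r => f (nodeX k ^ r))]
      by_cases hm0 : m = 0
      · subst hm0
        rw [if_pos rfl, if_neg (by simp), add_zero, pow_zero]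
      · rw [if_neg hm0, zero_add, if_pos (Finset.mem_Ico.mpr ⟨by omega, hm⟩)]
    -- evaluation of Θ b on small powers of y
    have hby : ∀ m : ℕ, m < a → E (b * nodeY k ^ m) = f (nodeY k ^ m) := by
      intro m hm
      rw [hbdef, add_mul, add_mul, Finset.sum_mul, Finset.sum_mul, hEadd, hEadd, hEsum, hEsum]
      have ht1 : E (f 1 * nodeY k ^ m) = if m = 0 then f 1 else 0 := by
        rw [hEmul_inv _ _ (hfinv 1), hEzpow _ _ hσy hwy m]
        by_cases hm0 : m = 0
        · subst hm0
          simp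
        · rw [if_neg (fun hd : a ∣ m => hm0 (Nat.eq_zero_of_dvd_of_lt hd hm)), mul_zero,
            if_neg hm0]
      have ht2 : ∀ r ∈ (Finset.Ico 1 a).attach,
          E (nodeY k ^ (a - (r : ℕ)) * Polynomial.aeval (nodeY k) (SY r) * nodeY k ^ m)
            = if (r : ℕ) = m then f (nodeY k ^ (r : ℕ)) else 0 := by
        intro r _
        obtain ⟨hr1, hr2⟩ := Finset.mem_Ico.mp r.2
        have heq : nodeY k ^ (a - (r : ℕ)) * Polynomial.aeval (nodeY k) (SY r) * nodeY k ^ m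
            = Polynomial.aeval (nodeY k) (Polynomial.X ^ (a - (r : ℕ) + m) * SY r) := by
          rw [map_mul, map_pow, Polynomial.aeval_X, pow_add]
          ring
        rw [heq]
        by_cases hrm : (r : ℕ) = m
        · rw [if_pos hrm]
          have hc : a - (r : ℕ) + m = a := by omega
          rw [hc, hEfix _ _ hσy hwy _ ?_, ← hSY2 r]
          intro t hta
          rw [Polynomial.coeff_X_pow_mul']
          by_cases hle : a ≤ t
          · rw [if_pos hle]
            refine hSY1 r _ (fun hdd => hta ?_)
            have h6 : t - a + a = t := by omega
            have h7 := Nat.dvd_add hdd (dvd_refl a)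
            rwa [h6] at h7
          · rw [if_neg hle]
        · rw [if_neg hrm]
          refine hEkill _ _ hσy hwy _ ?_
          intro t hta
          rw [Polynomial.coeff_X_pow_mul']
          by_cases hle : a - (r : ℕ) + m ≤ t
          · rw [if_pos hle]
            refine hSY1 r _ (fun hdd => ?_)
            have h6 : a ∣ t - (t - (a - (r : ℕ) + m)) := Nat.dvd_sub hta hdd
            have h7 : t - (t - (a - (r : ℕ) + m)) = a - (r : ℕ) + m := by omega
            rw [h7] at h6
            exact harith (r : ℕ) m hr1 hr2 hm hrm h6
          · rw [if_neg hle]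
      have ht3 : ∀ r ∈ (Finset.Ico 1 a).attach,
          E (nodeX k ^ (a - (r : ℕ)) * Polynomial.aeval (nodeX k) (SX r) * nodeY k ^ m)
            = 0 := by
        intro r _
        obtain ⟨hr1, hr2⟩ := Finset.mem_Ico.mp r.2
        by_cases hm0 : m = 0
        · subst hm0
          rw [pow_zero, mul_one]
          have heq : nodeX k ^ (a - (r : ℕ)) * Polynomial.aeval (nodeX k) (SX r)
              = Polynomial.aeval (nodeX k) (Polynomial.X ^ (a - (r : ℕ)) * SX r) := by
            rw [map_mul, map_pow, Polynomial.aeval_X]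
          rw [heq]
          refine hEkill _ _ hσx hwx _ ?_
          intro t hta
          rw [Polynomial.coeff_X_pow_mul']
          by_cases hle : a - (r : ℕ) ≤ t
          · rw [if_pos hle]
            refine hSX1 r _ (fun hdd => ?_)
            have h6 : a ∣ t - (t - (a - (r : ℕ))) := Nat.dvd_sub hta hdd
            have h7 : t - (t - (a - (r : ℕ))) = a - (r : ℕ) := by omega
            rw [h7] at h6
            have h8 := Nat.le_of_dvd (by omega) h6
            omega
          · rw [if_neg hle]
        · have h0 : nodeX k ^ (a - (r : ℕ)) * Polynomial.aeval (nodeX k) (SX r) * nodeY k ^ m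
              = Polynomial.aeval (nodeX k) (SX r)
                * (nodeX k ^ (a - (r : ℕ)) * nodeY k ^ m) := by ring
          rw [h0, node_pow_mul_pow k (by omega) (by omega), mul_zero, hE0]
      rw [Finset.sum_congr rfl ht2, Finset.sum_congr rfl ht3, ht1, Finset.sum_const_zero,
        add_zero,
        Finset.sum_attach (Finset.Ico 1 a) (fun r => if r = m then f (nodeY k ^ r) else 0),
        Finset.sum_ite_eq' (Finset.Ico 1 a) m (fun r => f (nodeY k ^ r))]
      by_cases hm0 : m = 0
      · subst hm0
        rw [if_pos rfl, if_neg (by simp), add_zero, pow_zero]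
      · rw [if_neg hm0, zero_add, if_pos (Finset.mem_Ico.mpr ⟨by omega, hm⟩)]
    -- all powers
    have hbxall : ∀ m : ℕ, E (b * nodeX k ^ m) = f (nodeX k ^ m) := by
      intro m
      have hdm := Nat.div_add_mod m a
      have hsplit : nodeX k ^ m = nodeX k ^ (a * (m / a)) * nodeX k ^ (m % a) := by
        rw [← pow_add, hdm]
      rw [hsplit, show b * (nodeX k ^ (a * (m / a)) * nodeX k ^ (m % a))
            = nodeX k ^ (a * (m / a)) * (b * nodeX k ^ (m % a)) by ring,
        hEmul_inv _ _ (hinvx (m / a)), hbx (m % a) (Nat.mod_lt m ha),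
        ← hfA _ _ (hinvx (m / a))]
    have hbyall : ∀ m : ℕ, E (b * nodeY k ^ m) = f (nodeY k ^ m) := by
      intro m
      have hdm := Nat.div_add_mod m a
      have hsplit : nodeY k ^ m = nodeY k ^ (a * (m / a)) * nodeY k ^ (m % a) := by
        rw [← pow_add, hdm]
      rw [hsplit, show b * (nodeY k ^ (a * (m / a)) * nodeY k ^ (m % a))
            = nodeY k ^ (a * (m / a)) * (b * nodeY k ^ (m % a)) by ring,
        hEmul_inv _ _ (hinvy (m / a)), hby (m % a) (Nat.mod_lt m ha),
        ← hfA _ _ (hinvy (m / a))]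
    -- Θ b = f everywhere
    have hgen : ∀ c, E (b * c) = f c := by
      intro c
      obtain ⟨P, Q, hQ0, rfl⟩ := node_rep k c
      rw [mul_add, hEadd, hfadd]
      congr 1
      · rw [Polynomial.aeval_eq_sum_range, Finset.mul_sum, hEsum, hfsum]
        refine Finset.sum_congr rfl fun m _ => ?_
        rw [mul_smul_comm, hEsmul, hfsmul, hbxall m]
      · rw [Polynomial.aeval_eq_sum_range, Finset.mul_sum, hEsum, hfsum]
        refine Finset.sum_congr rfl fun m _ => ?_
        rw [mul_smul_comm, hEsmul, hfsmul, hbyall m]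
    refine ⟨b, fun c => by rw [hΘ, hgen], ?_⟩
    intro b' hb'
    have hzero : ∀ c, E ((b' - b) * c) = 0 := by
      intro c
      rw [sub_mul, hEsub, show E (b' * c) = f c from by rw [← hΘ, ← hb' c], hgen, sub_self]
    exact sub_eq_zero.mp (hinj _ hzero)
  · intro b c
    rw [hΘ, hΘ, show σ b * c = σ (b * σ.symm c) by
      rw [map_mul, AlgEquiv.apply_symm_apply], hEσ]
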